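/- For M a symmetric n×n complex matrix, the fiber of the set C = {(A,B) : A ∈ S_r, B symmetric, rank B ≤ n−r, AB = 0} over A = M is isomorphic to the set of symmetric bilinear forms of rank at most n−r on the kernel of M, whenever ker M ∩ im M = 0; in particular if rank M = r, the fiber is the full set of symmetric matrices of rank ≤ n−r on the (n−r)-dimensional kernel. -/

import Mathlib

open Matrix

section aux

/-- The submodule of symmetric matrices `B` with `M * B = 0`. -/
noncomputable def symmKerSubmodule (n : ℕ) (M : Matrix (Fin n) (Fin n) ℂ) :
    Submodule ℂ (Matrix (Fin n) (Fin n) ℂ) where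
  carrier := {B | B.IsSymm ∧ M * B = 0}
  add_mem' := fun ha hb => ⟨ha.1.add hb.1, by
    rw [Matrix.mul_add, ha.2, hb.2, add_zero]⟩
  zero_mem' := ⟨Matrix.isSymm_zero, by simp⟩
  smul_mem' := fun c B hB => ⟨by
      simpa [Matrix.IsSymm, Matrix.transpose_smul] using congrArg (c • ·) hB.1,
    by rw [Matrix.mul_smul, hB.2, smul_zero]⟩

/-- The submodule of symmetric matrices. -/
noncomputable def symmSubmodule (m : ℕ) : Submodule ℂ (Matrix (Fin m) (Fin m) ℂ) where
  carrier := {C | C.IsSymm}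
  add_mem' := fun ha hb => ha.add hb
  zero_mem' := Matrix.isSymm_zero
  smul_mem' := fun c B hB => by
    simpa [Matrix.IsSymm, Matrix.transpose_smul] using congrArg (c • ·) hB

lemma entry_eq_mulVec_col {m n p : ℕ} (A : Matrix (Fin m) (Fin n) ℂ)
    (B : Matrix (Fin n) (Fin p) ℂ) (i : Fin m) (j : Fin p) :
    (A * B) i j = A.mulVec (fun k => B k j) i := by
  simp [Matrix.mul_apply, Matrix.mulVec, dotProduct]

/-- Key lemma: if every kernel vector of `M` is in the column space of `K`
and `L * K = 1`, then `K * L` acts as the identity on matrices `B` with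
`M * B = 0`. -/
lemma KL_fix {n m : ℕ} (M : Matrix (Fin n) (Fin n) ℂ)
    (K : Matrix (Fin n) (Fin m) ℂ) (L : Matrix (Fin m) (Fin n) ℂ)
    (hK : ∀ v : Fin n → ℂ, M.mulVec v = 0 → ∃ c, K.mulVec c = v)
    (hLK : L * K = 1)
    (B : Matrix (Fin n) (Fin n) ℂ) (hB : M * B = 0) :
    K * (L * B) = B := by
  ext i j
  have hcol : M.mulVec (fun k => B k j) = 0 := by
    funext i'
    have := congrFun (congrFun hB i') j
    simpa [entry_eq_mulVec_col] using this
  obtain ⟨c, hc⟩ := hK _ hcol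
  have h1 : (K * (L * B)) i j = (K * L).mulVec (fun k => B k j) i := by
    rw [← Matrix.mul_assoc]
    exact entry_eq_mulVec_col (K * L) B i j
  rw [h1, ← hc, Matrix.mulVec_mulVec, Matrix.mul_assoc, hLK, Matrix.mul_one, hc]

end aux

set_option maxHeartbeats 1000000 in
/-- For a symmetric `n × n` complex matrix `M` of rank `s` with
`ker M ∩ im M = 0`, the fiber `{B symmetric : M·B = 0}` of the incidence variety
`C = {(A,B) : A ∈ S_r, B symmetric, rank B ≤ n−r, AB = 0}` over `A = M` is
linearly isomorphic, by a rank-preserving linear equivalence, to the space of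
symmetric `(n-s) × (n-s)` matrices (symmetric bilinear forms on `ker M`); in
particular matrices of rank at most `n - r` correspond to matrices of rank at
most `n - r` on the `(n-s)`-dimensional kernel. -/
theorem stmt17 (n r s : ℕ) (hrn : r ≤ n)
    (M : Matrix (Fin n) (Fin n) ℂ) (hM : M.IsSymm) (hs : M.rank = s)
    (hker : LinearMap.ker M.mulVecLin ⊓ LinearMap.range M.mulVecLin = ⊥) :
    ∃ (U : Submodule ℂ (Matrix (Fin n) (Fin n) ℂ))
      (V : Submodule ℂ (Matrix (Fin (n - s)) (Fin (n - s)) ℂ)),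
      (U : Set (Matrix (Fin n) (Fin n) ℂ)) = {B | B.IsSymm ∧ M * B = 0} ∧
      (V : Set (Matrix (Fin (n - s)) (Fin (n - s)) ℂ)) = {C | C.IsSymm} ∧
      ∃ e : U ≃ₗ[ℂ] V, ∀ B : U,
        ((e B : Matrix (Fin (n - s)) (Fin (n - s)) ℂ)).rank
          = ((B : Matrix (Fin n) (Fin n) ℂ)).rank := by
  classical
  -- the kernel has dimension `n - s`
  have hdim : Module.finrank ℂ (LinearMap.ker M.mulVecLin) = n - s := by
    have h1 := LinearMap.finrank_range_add_finrank_ker M.mulVecLin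
    have h2 : Module.finrank ℂ (LinearMap.range M.mulVecLin) = s := hs
    have h3 : Module.finrank ℂ (Fin n → ℂ) = n := by simp
    omega
  -- a basis of the kernel
  let b : Module.Basis (Fin (n - s)) ℂ (LinearMap.ker M.mulVecLin) :=
    Module.finBasisOfFinrankEq ℂ _ hdim
  -- the matrix whose columns are the basis vectors
  let K : Matrix (Fin n) (Fin (n - s)) ℂ := Matrix.of fun i j => (b j : Fin n → ℂ) i
  have hKmul : ∀ c : Fin (n - s) → ℂ,
      K.mulVec c = ((∑ j, c j • b j : LinearMap.ker M.mulVecLin) : Fin n → ℂ) := by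
    intro c
    funext i
    have hrhs : ((∑ j, c j • b j : LinearMap.ker M.mulVecLin) : Fin n → ℂ) i
        = ∑ j, c j * (b j : Fin n → ℂ) i := by
      rw [Submodule.coe_sum]
      simp only [Finset.sum_apply, Submodule.coe_smul, Pi.smul_apply, smul_eq_mul]
    rw [hrhs]
    simp only [Matrix.mulVec, dotProduct, K, Matrix.of_apply]
    exact Finset.sum_congr rfl fun j _ => mul_comm _ _
  have hKker : ∀ c, M.mulVec (K.mulVec c) = 0 := by
    intro c
    rw [hKmul]
    exact (∑ j, c j • b j : LinearMap.ker M.mulVecLin).2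
  have hMK : M * K = 0 := by
    ext i j
    have hcol : (fun k => K k j) = K.mulVec (Pi.single j 1) := by
      funext k
      simp [Matrix.mulVec_single]
    rw [entry_eq_mulVec_col, hcol, hKker]
    rfl
  have hK : ∀ v : Fin n → ℂ, M.mulVec v = 0 → ∃ c, K.mulVec c = v := by
    intro v hv
    refine ⟨b.repr ⟨v, hv⟩, ?_⟩
    rw [hKmul]
    have : (∑ j, (b.repr ⟨v, hv⟩) j • b j) = (⟨v, hv⟩ : LinearMap.ker M.mulVecLin) :=
      b.sum_repr ⟨v, hv⟩
    rw [this]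
  -- `K.mulVecLin` is injective, get a left inverse `L`
  have hKinj : LinearMap.ker K.mulVecLin = ⊥ := by
    rw [LinearMap.ker_eq_bot']
    intro c hc
    have : ((∑ j, c j • b j : LinearMap.ker M.mulVecLin) : Fin n → ℂ) = 0 := by
      rw [← hKmul]; exact hc
    have h0 : (∑ j, c j • b j : LinearMap.ker M.mulVecLin) = 0 := Subtype.ext this
    have := linearIndependent_iff'.mp b.linearIndependent Finset.univ c (by simpa using h0)
    funext j
    exact this j (Finset.mem_univ j)
  obtain ⟨g, hg⟩ := K.mulVecLin.exists_leftInverse_of_injective hKinj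
  let L : Matrix (Fin (n - s)) (Fin n) ℂ := LinearMap.toMatrix' g
  have hLK : L * K = 1 := by
    have hK' : LinearMap.toMatrix' K.mulVecLin = K := by
      have : K.mulVecLin = Matrix.toLin' K := by
        ext c i
        simp [Matrix.toLin'_apply]
      rw [this]
      exact LinearMap.toMatrix'_toLin' K
    calc L * K = LinearMap.toMatrix' (g ∘ₗ K.mulVecLin) := by
          rw [LinearMap.toMatrix'_comp, hK']
      _ = 1 := by rw [hg, LinearMap.toMatrix'_id]
  have hKtLt : Kᵀ * Lᵀ = 1 := by
    rw [← Matrix.transpose_mul, hLK, Matrix.transpose_one]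
  -- the two submodules
  refine ⟨symmKerSubmodule n M, symmSubmodule (n - s), rfl, rfl, ?_⟩
  -- the key identity on elements of `U`
  have hfix : ∀ B : Matrix (Fin n) (Fin n) ℂ, B.IsSymm → M * B = 0 →
      K * (L * B * Lᵀ) * Kᵀ = B := by
    intro B hBs hB0
    have h1 : K * (L * B) = B := KL_fix M K L hK hLK B hB0
    have h2 : K * (L * B * Lᵀ) * Kᵀ = (K * (L * B)) * (Lᵀ * Kᵀ) := by
      simp only [Matrix.mul_assoc]
    have h3 : B * (Lᵀ * Kᵀ) = (K * (L * B))ᵀ := by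
      rw [Matrix.transpose_mul, Matrix.transpose_mul, hBs, Matrix.mul_assoc]
    rw [h2, h1, h3, h1, hBs]
  -- forward linear map
  let F : symmKerSubmodule n M →ₗ[ℂ] symmSubmodule (n - s) :=
    { toFun := fun B => ⟨L * (B : Matrix (Fin n) (Fin n) ℂ) * Lᵀ, by
        show (L * (B : Matrix (Fin n) (Fin n) ℂ) * Lᵀ)ᵀ = _
        rw [Matrix.transpose_mul, Matrix.transpose_mul, Matrix.transpose_transpose,
          B.2.1, Matrix.mul_assoc]⟩
      map_add' := fun A B => Subtype.ext (by
        show L * ((A : Matrix (Fin n) (Fin n) ℂ) + (B : Matrix (Fin n) (Fin n) ℂ)) * Lᵀ = L * (A : Matrix (Fin n) (Fin n) ℂ) * Lᵀ + L * (B : Matrix (Fin n) (Fin n) ℂ) * Lᵀ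
        rw [Matrix.mul_add, Matrix.add_mul])
      map_smul' := fun c B => Subtype.ext (by
        show L * (c • (B : Matrix (Fin n) (Fin n) ℂ)) * Lᵀ = c • (L * (B : Matrix (Fin n) (Fin n) ℂ) * Lᵀ)
        rw [Matrix.mul_smul, Matrix.smul_mul]) }
  -- backward linear map
  let G : symmSubmodule (n - s) →ₗ[ℂ] symmKerSubmodule n M :=
    { toFun := fun C => ⟨K * (C : Matrix (Fin (n - s)) (Fin (n - s)) ℂ) * Kᵀ,
        ⟨by
          show (K * (C : Matrix (Fin (n - s)) (Fin (n - s)) ℂ) * Kᵀ)ᵀ = _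
          rw [Matrix.transpose_mul, Matrix.transpose_mul, Matrix.transpose_transpose,
            C.2, Matrix.mul_assoc],
        by
          show M * (K * (C : Matrix (Fin (n - s)) (Fin (n - s)) ℂ) * Kᵀ) = 0
          rw [← Matrix.mul_assoc, ← Matrix.mul_assoc, hMK, Matrix.zero_mul,
            Matrix.zero_mul]⟩⟩
      map_add' := fun A B => Subtype.ext (by
        show K * ((A : Matrix (Fin (n - s)) (Fin (n - s)) ℂ) + (B : Matrix (Fin (n - s)) (Fin (n - s)) ℂ)) * Kᵀ = K * (A : Matrix (Fin (n - s)) (Fin (n - s)) ℂ) * Kᵀ + K * (B : Matrix (Fin (n - s)) (Fin (n - s)) ℂ) * Kᵀ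
        rw [Matrix.mul_add, Matrix.add_mul])
      map_smul' := fun c B => Subtype.ext (by
        show K * (c • (B : Matrix (Fin (n - s)) (Fin (n - s)) ℂ)) * Kᵀ = c • (K * (B : Matrix (Fin (n - s)) (Fin (n - s)) ℂ) * Kᵀ)
        rw [Matrix.mul_smul, Matrix.smul_mul]) }
  have hFG : ∀ C : symmSubmodule (n - s), F (G C) = C := by
    intro C
    apply Subtype.ext
    show L * (K * (C : Matrix (Fin (n - s)) (Fin (n - s)) ℂ) * Kᵀ) * Lᵀ = (C : Matrix (Fin (n - s)) (Fin (n - s)) ℂ)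
    calc L * (K * (C : Matrix (Fin (n - s)) (Fin (n - s)) ℂ) * Kᵀ) * Lᵀ = (L * K) * (C : Matrix (Fin (n - s)) (Fin (n - s)) ℂ) * (Kᵀ * Lᵀ) := by
          simp only [Matrix.mul_assoc]
      _ = (C : Matrix (Fin (n - s)) (Fin (n - s)) ℂ) := by rw [hLK, hKtLt, Matrix.one_mul, Matrix.mul_one]
  have hGF : ∀ B : symmKerSubmodule n M, G (F B) = B := by
    intro B
    apply Subtype.ext
    show K * (L * (B : Matrix (Fin n) (Fin n) ℂ) * Lᵀ) * Kᵀ = (B : Matrix (Fin n) (Fin n) ℂ)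
    exact hfix (B : Matrix (Fin n) (Fin n) ℂ) B.2.1 B.2.2
  refine ⟨{ toLinearMap := F, invFun := G, left_inv := hGF, right_inv := hFG }, ?_⟩
  intro B
  show (L * (B : Matrix (Fin n) (Fin n) ℂ) * Lᵀ).rank = ((B : Matrix (Fin n) (Fin n) ℂ)).rank
  apply le_antisymm
  · calc (L * (B : Matrix (Fin n) (Fin n) ℂ) * Lᵀ).rank ≤ (L * (B : Matrix (Fin n) (Fin n) ℂ)).rank := Matrix.rank_mul_le_left _ _
      _ ≤ ((B : Matrix (Fin n) (Fin n) ℂ)).rank := Matrix.rank_mul_le_right _ _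
  · conv_lhs => rw [← hfix (B : Matrix (Fin n) (Fin n) ℂ) B.2.1 B.2.2]
    calc (K * (L * (B : Matrix (Fin n) (Fin n) ℂ) * Lᵀ) * Kᵀ).rank ≤ (K * (L * (B : Matrix (Fin n) (Fin n) ℂ) * Lᵀ)).rank :=
          Matrix.rank_mul_le_left _ _
      _ ≤ (L * (B : Matrix (Fin n) (Fin n) ℂ) * Lᵀ).rank := Matrix.rank_mul_le_right _ _
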